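/- Let C be a symmetric nondegenerate n×n real matrix with orthogonal invariant decomposition ℝⁿ = L₊ ⊕ L₋ where C|_{L₊} is positive definite and C|_{L₋} is negative definite, and let P₊ be the orthogonal projection onto L₊. For c > 0, the map x ↦ √(c/⟨C P₊ x, P₊ x⟩) · P₊ x is a well-defined continuous retraction of the level set N = {x ∈ ℝⁿ : ⟨Cx, x⟩ = c} onto N ∩ L₊; in particular, for every x ∈ N one has ⟨C P₊ x, P₊ x⟩ > 0. -/

import Mathlib

open Set
open scoped RealInnerProductSpace

theorem stmt_8 (n : ℕ)
    (C Pp : EuclideanSpace ℝ (Fin n) →ₗ[ℝ] EuclideanSpace ℝ (Fin n))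
    (Lp Lm : Submodule ℝ (EuclideanSpace ℝ (Fin n)))
    (hCsym : ∀ x y, ⟪C x, y⟫ = ⟪x, C y⟫)
    (hCinj : Function.Injective C)
    (horth : ∀ x ∈ Lp, ∀ y ∈ Lm, ⟪x, y⟫ = 0)
    (hspan : Lp ⊔ Lm = ⊤)
    (hinvp : ∀ x ∈ Lp, C x ∈ Lp) (hinvm : ∀ x ∈ Lm, C x ∈ Lm)
    (hpos : ∀ x ∈ Lp, x ≠ 0 → 0 < ⟪C x, x⟫)
    (hneg : ∀ x ∈ Lm, x ≠ 0 → ⟪C x, x⟫ < 0)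
    (hPp : ∀ x, Pp x ∈ Lp ∧ x - Pp x ∈ Lm)
    (c : ℝ) (hc : 0 < c)
    (N : Set (EuclideanSpace ℝ (Fin n))) (hN : N = {x | ⟪C x, x⟫ = c})
    (r : EuclideanSpace ℝ (Fin n) → EuclideanSpace ℝ (Fin n))
    (hr : ∀ x, r x = Real.sqrt (c / ⟪C (Pp x), Pp x⟫) • Pp x) :
    (∀ x ∈ N, 0 < ⟪C (Pp x), Pp x⟫) ∧
    ContinuousOn r N ∧
    (∀ x ∈ N, r x ∈ N ∩ ↑Lp) ∧
    (∀ x ∈ N ∩ ↑Lp, r x = x) := by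
  -- decomposition of the quadratic form
  have hsplit : ∀ x : EuclideanSpace ℝ (Fin n),
      ⟪C x, x⟫ = ⟪C (Pp x), Pp x⟫ + ⟪C (x - Pp x), x - Pp x⟫ := by
    intro x
    obtain ⟨hp, hm⟩ := hPp x
    have hx : x = Pp x + (x - Pp x) := by abel
    have h1 : ⟪C (Pp x), x - Pp x⟫ = 0 := horth _ (hinvp _ hp) _ hm
    have h2 : ⟪C (x - Pp x), Pp x⟫ = 0 := by
      rw [real_inner_comm]
      exact horth _ hp _ (hinvm _ hm)
    calc ⟪C x, x⟫ = ⟪C (Pp x + (x - Pp x)), Pp x + (x - Pp x)⟫ := by rw [← hx]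
      _ = ⟪C (Pp x), Pp x⟫ + ⟪C (Pp x), x - Pp x⟫
          + (⟪C (x - Pp x), Pp x⟫ + ⟪C (x - Pp x), x - Pp x⟫) := by
          rw [map_add, inner_add_left, inner_add_right, inner_add_right]
      _ = _ := by rw [h1, h2]; ring
  have key : ∀ x ∈ N, c ≤ ⟪C (Pp x), Pp x⟫ := by
    intro x hx
    rw [hN] at hx
    have hm := (hPp x).2
    have hle : ⟪C (x - Pp x), x - Pp x⟫ ≤ 0 := by
      by_cases h : x - Pp x = 0
      · simp [h]
      · exact le_of_lt (hneg _ hm h)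
    have := hsplit x
    rw [hx] at this
    linarith
  have hposq : ∀ x ∈ N, 0 < ⟪C (Pp x), Pp x⟫ := fun x hx => lt_of_lt_of_le hc (key x hx)
  refine ⟨hposq, ?_, ?_, ?_⟩
  · -- continuity
    have hpc : Continuous (fun x => (Pp x : EuclideanSpace ℝ (Fin n))) :=
      Pp.continuous_of_finiteDimensional
    have hq : Continuous (fun x => ⟪C (Pp x), Pp x⟫) :=
      Continuous.inner (C.continuous_of_finiteDimensional.comp hpc) hpc
    have : ContinuousOn (fun x => Real.sqrt (c / ⟪C (Pp x), Pp x⟫) • Pp x) N := by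
      apply ContinuousOn.fun_smul
      · apply Real.continuous_sqrt.comp_continuousOn
        exact continuousOn_const.div hq.continuousOn
          (fun x hx => ne_of_gt (hposq x hx))
      · exact hpc.continuousOn
    exact this.congr (fun x _ => hr x)
  · intro x hx
    have hq := hposq x hx
    constructor
    · rw [hN, mem_setOf_eq, hr, map_smul, real_inner_smul_left, real_inner_smul_right,
        ← mul_assoc, Real.mul_self_sqrt (le_of_lt (div_pos hc hq)),
        div_mul_cancel₀ _ (ne_of_gt hq)]
    · rw [SetLike.mem_coe, hr]
      exact Submodule.smul_mem _ _ (hPp x).1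
  · intro x ⟨hxN, hxLp⟩
    -- Pp x = x since x - Pp x ∈ Lp ∩ Lm
    have hd : x - Pp x ∈ Lp := Submodule.sub_mem _ hxLp (hPp x).1
    have hd0 : x - Pp x = 0 := by
      have := horth _ hd _ (hPp x).2
      exact inner_self_eq_zero.mp this
    have hPx : Pp x = x := by
      have := sub_eq_zero.mp hd0; exact this.symm
    rw [hN] at hxN
    rw [hr, hPx, hxN, div_self (ne_of_gt hc), Real.sqrt_one, one_smul]
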